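/- Let A be a unital complex algebra of operators and let p, q, a_i, b_i, c_i, d_i (1 ≤ i ≤ n) be elements of A satisfying a_i b_j = δ_{ij} p and c_i d_j = δ_{ij} q. Let W₁, W₂ be n×n unitary matrices with all entries of modulus n^{-1/2}, and set ε¹_{ij} = n^{1/2}·conj(W₁(i,j)), ε²_{ij} = n^{1/2}·conj(W₂(i,j)). For x = [x_{ij}] ∈ M_n(A), define the diagonal matrices D₁ = diag(a₁,...,a_n), D₃ = diag(d₁,...,d_n), and D₂ = diag(D₂(1),...,D₂(n)) where D₂(k) = ∑_{i,j} ε¹_{ik} b_i x_{ij} c_j ε²_{kj}. Then the matrix product D₁ W₁ D₂ W₂ D₃ (with W₁, W₂ viewed as scalar matrices over A) equals the matrix [p·x_{ij}·q]. -/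

import Mathlib

/-- Lemma 5, algebraic identity: in a unital complex algebra `A`, given
`p, q, aᵢ, bᵢ, cᵢ, dᵢ` with `aᵢ bⱼ = δᵢⱼ p`, `cᵢ dⱼ = δᵢⱼ q`, unitary matrices `W₁, W₂`
with entries of modulus `n^(-1/2)`, `ε¹ᵢⱼ = √n · conj (W₁ i j)`, `ε²ᵢⱼ = √n · conj (W₂ i j)`,
and the diagonal matrices `D₁ = diag(aᵢ)`, `D₂(k) = ∑ᵢⱼ ε¹ᵢₖ bᵢ xᵢⱼ cⱼ ε²ₖⱼ`, `D₃ = diag(dᵢ)`,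
we have `D₁ W₁ D₂ W₂ D₃ = [p xᵢⱼ q]`. -/
theorem stmt2 {A : Type*} [Ring A] [Algebra ℂ A] (n : ℕ)
    (p q : A) (a b c d : Fin n → A)
    (hab : ∀ i j, a i * b j = if i = j then p else 0)
    (hcd : ∀ i j, c i * d j = if i = j then q else 0)
    (W₁ W₂ : Matrix (Fin n) (Fin n) ℂ)
    (hW₁ : W₁ ∈ Matrix.unitaryGroup (Fin n) ℂ) (hW₂ : W₂ ∈ Matrix.unitaryGroup (Fin n) ℂ)
    (hmod₁ : ∀ i j, ‖W₁ i j‖ = (n : ℝ) ^ (-(1 / 2 : ℝ)))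
    (hmod₂ : ∀ i j, ‖W₂ i j‖ = (n : ℝ) ^ (-(1 / 2 : ℝ)))
    (x : Matrix (Fin n) (Fin n) A)
    (ε₁ ε₂ : Fin n → Fin n → ℂ)
    (hε₁ : ∀ i j, ε₁ i j = (Real.sqrt n : ℂ) * (starRingEnd ℂ) (W₁ i j))
    (hε₂ : ∀ i j, ε₂ i j = (Real.sqrt n : ℂ) * (starRingEnd ℂ) (W₂ i j))
    (D₁ D₂ D₃ : Matrix (Fin n) (Fin n) A)
    (hD₁ : D₁ = Matrix.diagonal a) (hD₃ : D₃ = Matrix.diagonal d)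
    (hD₂ : D₂ = Matrix.diagonal fun k => ∑ i, ∑ j, (ε₁ i k * ε₂ k j) • (b i * x i j * c j)) :
    D₁ * W₁.map (algebraMap ℂ A) * D₂ * W₂.map (algebraMap ℂ A) * D₃ =
      Matrix.of fun i j => p * x i j * q := by
  subst hD₁ hD₂ hD₃
  ext i j
  have hn : (0:ℝ) < n := by exact_mod_cast i.pos
  have key : ∀ (W : Matrix (Fin n) (Fin n) ℂ),
      (∀ i j, ‖W i j‖ = (n : ℝ) ^ (-(1 / 2 : ℝ))) →
      ∀ s t, W s t * ((Real.sqrt n : ℂ) * (starRingEnd ℂ) (W s t))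
        = (Real.sqrt n : ℂ) * (n : ℂ)⁻¹ := by
    intro W hm s t
    rw [mul_left_comm, Complex.mul_conj]
    congr 1
    rw [← Complex.sq_norm, hm]
    norm_cast
    rw [← Real.rpow_natCast ((n:ℝ) ^ (-(1/2:ℝ))) 2, ← Real.rpow_mul hn.le]
    norm_num [Real.rpow_neg_one]
  rw [Matrix.of_apply, Matrix.mul_diagonal, Matrix.mul_apply]
  simp only [Matrix.mul_diagonal, Matrix.diagonal_mul, Matrix.map_apply]
  have hxij : ∀ s t : Fin n, a i * (b s * x s t * c t) * d j
      = (if i = s then p else 0) * x s t * (if t = j then q else 0) := by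
    intro s t
    rw [← hab, ← hcd]
    noncomm_ring
  have hterm : ∀ k : Fin n,
      (a i * (algebraMap ℂ A) (W₁ i k) * ∑ s, ∑ t, (ε₁ s k * ε₂ k t) • (b s * x s t * c t)) *
        (algebraMap ℂ A) (W₂ k j) * d j = (n:ℂ)⁻¹ • (p * x i j * q) := by
    intro k
    simp only [Finset.mul_sum, Finset.sum_mul]
    simp only [Algebra.algebraMap_eq_smul_one, mul_smul_comm, smul_mul_assoc, mul_one, one_mul,
      smul_smul]
    simp only [hxij, ite_mul, mul_ite, zero_mul, mul_zero, smul_ite, smul_zero,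
      Finset.sum_ite_eq, Finset.sum_ite_eq', Finset.mem_univ, if_true]
    congr 1
    rw [hε₁, hε₂]
    have h1 := key W₁ hmod₁ i k
    have h2 := key W₂ hmod₂ k j
    have hsq : (Real.sqrt n : ℂ) * (Real.sqrt n : ℂ) = (n : ℂ) := by
      norm_cast
      exact Real.mul_self_sqrt hn.le
    rw [show W₂ k j * ((Real.sqrt n : ℂ) * (starRingEnd ℂ) (W₁ i k) *
          ((Real.sqrt n : ℂ) * (starRingEnd ℂ) (W₂ k j)) * W₁ i k)
        = (W₁ i k * ((Real.sqrt n : ℂ) * (starRingEnd ℂ) (W₁ i k))) *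
          (W₂ k j * ((Real.sqrt n : ℂ) * (starRingEnd ℂ) (W₂ k j))) from by ring,
      h1, h2, mul_mul_mul_comm, hsq]
    have hn0 : (n : ℂ) ≠ 0 := by exact_mod_cast hn.ne'
    field_simp
  rw [Finset.sum_mul, Finset.sum_congr rfl fun k _ => hterm k, Finset.sum_const,
    Finset.card_univ, Fintype.card_fin, ← Nat.cast_smul_eq_nsmul ℂ, smul_smul,
    mul_inv_cancel₀ (by exact_mod_cast hn.ne'), one_smul]
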